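/- Let 0 < α < π/2 and let a, b be real numbers with −1 < a < b < 1. Assume that for every t ∈ [a, b] both 1 − t² + t(t−a) − ((t−a)²/4)·sec²α > 0 and 1 − a² − a(t−a) − ((t−a)²/4)·sec²α > 0. Set δ = b − a. Then cos α · [ arcsin( ((δ/2)·sec α − b·cos α)/√(1 − b²·sin²α) ) + arcsin( b·cos α/√(1 − b²·sin²α) ) − arcsin( a·cos α/√(1 − a²·sin²α) ) + arcsin( ((δ/2)·sec α + a·cos α)/√(1 − a²·sin²α) ) ] − arcsin b + arcsin a > 0. (This quantity is the paper's time excess δT_a of the bang-bang detour over the equatorial singular arc joining two equatorial Bloch points with z-coordinates a and b on the same side of the xz-plane; its positivity proves Proposition 1 in the case r⁻_y·r⁺_y > 0.) -/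

import Mathlib

open Real

lemma hda_arcsin_div {u v : ℝ → ℝ} {u' v' x : ℝ}
    (hu : HasDerivAt u u' x) (hv : HasDerivAt v v' x)
    (hv0 : 0 < v x) (h : (u x)^2 < (v x)^2) :
    HasDerivAt (fun y => arcsin (u y / v y))
      ((u' * v x - u x * v') / (v x * Real.sqrt ((v x)^2 - (u x)^2))) x := by
  have habs : |u x| < v x := by
    have := lt_of_pow_lt_pow_left₀ 2 (abs_nonneg (v x))
      (by rwa [← sq_abs (u x), ← sq_abs (v x)] at h)
    rwa [abs_of_pos hv0] at this
  have h1 : |u x / v x| < 1 := by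
    rw [abs_div, abs_of_pos hv0, div_lt_one hv0]; exact habs
  have hne1 : u x / v x ≠ -1 := by intro hh; rw [hh] at h1; norm_num at h1
  have hne2 : u x / v x ≠ 1 := by intro hh; rw [hh] at h1; norm_num at h1
  have hd := (Real.hasDerivAt_arcsin hne1 hne2).comp x (hu.div hv hv0.ne')
  refine hd.congr_deriv ?_
  have hQ : 0 < (v x)^2 - (u x)^2 := by linarith
  have hsq : Real.sqrt (1 - (u x / v x)^2) = Real.sqrt ((v x)^2 - (u x)^2) / v x := by
    rw [show 1 - (u x / v x)^2 = ((v x)^2 - (u x)^2) / (v x)^2 by field_simp,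
      Real.sqrt_div hQ.le, Real.sqrt_sq hv0.le]
  rw [hsq]
  have h2 : Real.sqrt ((v x)^2 - (u x)^2) ≠ 0 := (Real.sqrt_pos.mpr hQ).ne'
  field_simp

set_option maxHeartbeats 2000000 in
/-- Positivity of the time excess `δT_a` of the bang-bang detour over the equatorial
singular arc (Proposition 1, case `r⁻_y · r⁺_y > 0`). -/
theorem deltaTa_pos (α a b : ℝ) (hα₀ : 0 < α) (hα₁ : α < π / 2)
    (ha : -1 < a) (hab : a < b) (hb : b < 1)
    (hpos₁ : ∀ t ∈ Set.Icc a b,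
      1 - t ^ 2 + t * (t - a) - ((t - a) ^ 2 / 4) * (1 / cos α) ^ 2 > 0)
    (hpos₂ : ∀ t ∈ Set.Icc a b,
      1 - a ^ 2 - a * (t - a) - ((t - a) ^ 2 / 4) * (1 / cos α) ^ 2 > 0)
    (δ : ℝ) (hδ : δ = b - a) :
    cos α *
        (arcsin ((δ / 2 * (1 / cos α) - b * cos α) / Real.sqrt (1 - b ^ 2 * sin α ^ 2)) +
          arcsin (b * cos α / Real.sqrt (1 - b ^ 2 * sin α ^ 2)) -
          arcsin (a * cos α / Real.sqrt (1 - a ^ 2 * sin α ^ 2)) +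
          arcsin ((δ / 2 * (1 / cos α) + a * cos α) / Real.sqrt (1 - a ^ 2 * sin α ^ 2))) -
      arcsin b + arcsin a > 0 := by
  subst hδ
  have hc : 0 < cos α := Real.cos_pos_of_mem_Ioo ⟨by linarith [Real.pi_pos], hα₁⟩
  have hs : 0 < sin α := Real.sin_pos_of_pos_of_lt_pi hα₀ (by linarith [Real.pi_pos])
  set c := cos α with hcdef
  set s := sin α with hsdef
  have hs2 : s ^ 2 = 1 - c ^ 2 := by
    have := Real.sin_sq_add_cos_sq α; rw [← hsdef, ← hcdef] at this; linarith
  have ha1 : a < 1 := lt_trans hab hb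
  have hb1 : -1 < b := lt_trans ha hab
  -- basic positivity on the interval
  have hx2lt : ∀ x ∈ Set.Icc a b, x ^ 2 < 1 := by
    intro x hx; nlinarith [hx.1, hx.2]
  have hslt : s ^ 2 < 1 := by nlinarith
  have hBxpos : ∀ x ∈ Set.Icc a b, 0 < 1 - x ^ 2 * s ^ 2 := by
    intro x hx
    nlinarith [hx2lt x hx, sq_nonneg x, sq_nonneg s, mul_nonneg (sq_nonneg x) (sq_nonneg s)]
  have hA2 : 0 < 1 - a ^ 2 * s ^ 2 :=
    hBxpos a (Set.left_mem_Icc.mpr hab.le)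
  have hQpos : ∀ x ∈ Set.Icc a b, 0 < 1 - a * x - (x - a) ^ 2 / (4 * c ^ 2) := by
    intro x hx
    have h := hpos₂ x hx
    have e : ((x - a) ^ 2 / 4) * (1 / c) ^ 2 = (x - a) ^ 2 / (4 * c ^ 2) := by
      field_simp
    nlinarith [h, e]
  set F : ℝ → ℝ := fun x =>
    c * (arcsin (((x - a) / 2 * (1 / c) - x * c) / Real.sqrt (1 - x ^ 2 * s ^ 2)) +
          arcsin (x * c / Real.sqrt (1 - x ^ 2 * s ^ 2)) -
          arcsin (a * c / Real.sqrt (1 - a ^ 2 * s ^ 2)) +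
          arcsin (((x - a) / 2 * (1 / c) + a * c) / Real.sqrt (1 - a ^ 2 * s ^ 2))) -
      arcsin x + arcsin a with hFdef
  have hAne : Real.sqrt (1 - a ^ 2 * s ^ 2) ≠ 0 := (Real.sqrt_pos.mpr hA2).ne'
  -- continuity
  have hBne : ∀ x ∈ Set.Icc a b, Real.sqrt (1 - x ^ 2 * s ^ 2) ≠ 0 :=
    fun x hx => (Real.sqrt_pos.mpr (hBxpos x hx)).ne'
  have hcont : ContinuousOn F (Set.Icc a b) := by
    rw [hFdef]
    apply ContinuousOn.add
    apply ContinuousOn.sub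
    · apply ContinuousOn.mul continuousOn_const
      apply ContinuousOn.add
      apply ContinuousOn.sub
      apply ContinuousOn.add
      · exact Real.continuous_arcsin.comp_continuousOn <|
          ContinuousOn.div (by fun_prop) (by fun_prop) hBne
      · exact Real.continuous_arcsin.comp_continuousOn <|
          ContinuousOn.div (by fun_prop) (by fun_prop) hBne
      · exact continuousOn_const
      · exact Real.continuous_arcsin.comp_continuousOn <|
          ContinuousOn.div (by fun_prop) continuousOn_const (fun x _ => hAne)
    · exact Real.continuous_arcsin.continuousOn
    · exact continuousOn_const
  -- derivative positivity
  have hderiv : ∀ x ∈ interior (Set.Icc a b), 0 < deriv F x := by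
    rw [interior_Icc]
    intro x hx
    have hxI : x ∈ Set.Icc a b := ⟨hx.1.le, hx.2.le⟩
    have hx1 : -1 < x := lt_trans ha hx.1
    have hx1' : x < 1 := lt_trans hx.2 hb
    have hW : 0 < 1 - x ^ 2 := by nlinarith
    have hBx : 0 < 1 - x ^ 2 * s ^ 2 := hBxpos x hxI
    have hQx : 0 < 1 - a * x - (x - a) ^ 2 / (4 * c ^ 2) := hQpos x hxI
    have hBBpos : 0 < Real.sqrt (1 - x ^ 2 * s ^ 2) := Real.sqrt_pos.mpr hBx
    have hApos : 0 < Real.sqrt (1 - a ^ 2 * s ^ 2) := Real.sqrt_pos.mpr hA2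
    have hPpos : 0 < Real.sqrt (1 - a * x - (x - a) ^ 2 / (4 * c ^ 2)) := Real.sqrt_pos.mpr hQx
    have hWpos : 0 < Real.sqrt (1 - x ^ 2) := Real.sqrt_pos.mpr hW
    -- argument identities
    have e1 : 1 - x ^ 2 * s ^ 2 - ((x - a) / 2 * (1 / c) - x * c) ^ 2
        = 1 - a * x - (x - a) ^ 2 / (4 * c ^ 2) := by
      rw [hs2]; field_simp; ring
    have e2 : 1 - x ^ 2 * s ^ 2 - (x * c) ^ 2 = 1 - x ^ 2 := by
      rw [hs2]; ring
    have e4 : 1 - a ^ 2 * s ^ 2 - ((x - a) / 2 * (1 / c) + a * c) ^ 2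
        = 1 - a * x - (x - a) ^ 2 / (4 * c ^ 2) := by
      rw [hs2]; field_simp; ring
    -- elementary derivatives
    have hu1 : HasDerivAt (fun y : ℝ => (y - a) / 2 * (1 / c) - y * c) (1 / 2 * (1 / c) - c) x := by
      have h1 : HasDerivAt (fun y : ℝ => (y - a) / 2 * (1 / c)) (1 / 2 * (1 / c)) x := by
        simpa using (((hasDerivAt_id x).sub_const a).div_const 2).mul_const (1 / c)
      have h2 : HasDerivAt (fun y : ℝ => y * c) c x := by
        simpa using (hasDerivAt_id x).mul_const c
      exact h1.sub h2
    have hu2 : HasDerivAt (fun y : ℝ => y * c) c x := by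
      simpa using (hasDerivAt_id x).mul_const c
    have hu3 : HasDerivAt (fun y : ℝ => (y - a) / 2 * (1 / c) + a * c) (1 / 2 * (1 / c)) x := by
      have h1 : HasDerivAt (fun y : ℝ => (y - a) / 2 * (1 / c)) (1 / 2 * (1 / c)) x := by
        simpa using (((hasDerivAt_id x).sub_const a).div_const 2).mul_const (1 / c)
      exact h1.add_const (a * c)
    have hvB : HasDerivAt (fun y : ℝ => Real.sqrt (1 - y ^ 2 * s ^ 2))
        (-(x * s ^ 2) / Real.sqrt (1 - x ^ 2 * s ^ 2)) x := by
      have hinner : HasDerivAt (fun y : ℝ => 1 - y ^ 2 * s ^ 2) (-(2 * x * s ^ 2)) x := by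
        have := ((hasDerivAt_pow 2 x).mul_const (s ^ 2)).const_sub 1
        simpa using this
      have := (Real.hasDerivAt_sqrt hBx.ne').comp x hinner
      refine this.congr_deriv ?_
      field_simp
    -- the inequalities |u| < v
    have hlt1 : (((x - a) / 2 * (1 / c) - x * c)) ^ 2 < (Real.sqrt (1 - x ^ 2 * s ^ 2)) ^ 2 := by
      rw [Real.sq_sqrt hBx.le]; linarith [e1, hQx]
    have hlt2 : (x * c) ^ 2 < (Real.sqrt (1 - x ^ 2 * s ^ 2)) ^ 2 := by
      rw [Real.sq_sqrt hBx.le]; linarith [e2, hW]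
    have hlt4 : (((x - a) / 2 * (1 / c) + a * c)) ^ 2 < (Real.sqrt (1 - a ^ 2 * s ^ 2)) ^ 2 := by
      rw [Real.sq_sqrt hA2.le]; linarith [e4, hQx]
    -- derivatives of the four arcsin terms
    have h1 := hda_arcsin_div hu1 hvB hBBpos hlt1
    simp only [Real.sq_sqrt hBx.le, e1] at h1
    have h2 := hda_arcsin_div hu2 hvB hBBpos hlt2
    simp only [Real.sq_sqrt hBx.le, e2] at h2
    have h4 := hda_arcsin_div hu3 (hasDerivAt_const x (Real.sqrt (1 - a ^ 2 * s ^ 2))) hApos hlt4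
    simp only [Real.sq_sqrt hA2.le, e4] at h4
    have hxne1 : x ≠ 1 := ne_of_lt hx1'
    have hxnem1 : x ≠ -1 := ne_of_gt hx1
    have hsum := ((((h1.add h2).sub_const
        (arcsin (a * c / Real.sqrt (1 - a ^ 2 * s ^ 2)))).add h4).const_mul c).sub
        (Real.hasDerivAt_arcsin hxnem1 hxne1)
    have hF : HasDerivAt F
        (c * (((1 / 2 * (1 / c) - c) * Real.sqrt (1 - x ^ 2 * s ^ 2) -
              ((x - a) / 2 * (1 / c) - x * c) * (-(x * s ^ 2) / Real.sqrt (1 - x ^ 2 * s ^ 2))) /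
            (Real.sqrt (1 - x ^ 2 * s ^ 2) *
              Real.sqrt (1 - a * x - (x - a) ^ 2 / (4 * c ^ 2))) +
          (c * Real.sqrt (1 - x ^ 2 * s ^ 2) -
              x * c * (-(x * s ^ 2) / Real.sqrt (1 - x ^ 2 * s ^ 2))) /
            (Real.sqrt (1 - x ^ 2 * s ^ 2) * Real.sqrt (1 - x ^ 2)) +
          (1 / 2 * (1 / c) * Real.sqrt (1 - a ^ 2 * s ^ 2) -
              ((x - a) / 2 * (1 / c) + a * c) * 0) /
            (Real.sqrt (1 - a ^ 2 * s ^ 2) *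
              Real.sqrt (1 - a * x - (x - a) ^ 2 / (4 * c ^ 2)))) -
        1 / Real.sqrt (1 - x ^ 2)) x := by
      rw [hFdef]
      exact hsum.add_const (arcsin a)
    rw [hF.deriv]
    -- clean up the derivative
    set BB := Real.sqrt (1 - x ^ 2 * s ^ 2) with hBBdef
    set P := Real.sqrt (1 - a * x - (x - a) ^ 2 / (4 * c ^ 2)) with hPdef
    set W := Real.sqrt (1 - x ^ 2) with hWdef
    set A := Real.sqrt (1 - a ^ 2 * s ^ 2) with hAdef
    have hBB2 : BB ^ 2 = 1 - x ^ 2 * s ^ 2 := Real.sq_sqrt hBx.le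
    have hP2 : P ^ 2 = 1 - a * x - (x - a) ^ 2 / (4 * c ^ 2) := Real.sq_sqrt hQx.le
    have hW2 : W ^ 2 = 1 - x ^ 2 := Real.sq_sqrt hW.le
    have key : c * (((1 / 2 * (1 / c) - c) * BB -
              ((x - a) / 2 * (1 / c) - x * c) * (-(x * s ^ 2) / BB)) / (BB * P) +
          (c * BB - x * c * (-(x * s ^ 2) / BB)) / (BB * W) +
          (1 / 2 * (1 / c) * A - ((x - a) / 2 * (1 / c) + a * c) * 0) / (A * P)) -
        1 / W
        = s ^ 2 * (2 - a * x - x ^ 2) / (2 * BB ^ 2 * P) - s ^ 2 * W / BB ^ 2 := by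
      have hBBne : BB ≠ 0 := (Real.sqrt_pos.mpr hBx).ne'
      have hPne : P ≠ 0 := hPpos.ne'
      have hWne : W ≠ 0 := hWpos.ne'
      have hAne' : A ≠ 0 := hApos.ne'
      have n1 : (2 - 2 * c ^ 2) * BB ^ 2 + x * (x - a) * s ^ 2 - 2 * x ^ 2 * c ^ 2 * s ^ 2
          = s ^ 2 * (2 - a * x - x ^ 2) := by rw [hBB2, hs2]; ring
      have n2 : c ^ 2 * BB ^ 2 + c ^ 2 * x ^ 2 * s ^ 2 - BB ^ 2 = -(s ^ 2 * W ^ 2) := by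
        rw [hBB2, hW2, hs2]; ring
      calc c * (((1 / 2 * (1 / c) - c) * BB -
              ((x - a) / 2 * (1 / c) - x * c) * (-(x * s ^ 2) / BB)) / (BB * P) +
          (c * BB - x * c * (-(x * s ^ 2) / BB)) / (BB * W) +
          (1 / 2 * (1 / c) * A - ((x - a) / 2 * (1 / c) + a * c) * 0) / (A * P)) -
        1 / W
          = ((2 - 2 * c ^ 2) * BB ^ 2 + x * (x - a) * s ^ 2 - 2 * x ^ 2 * c ^ 2 * s ^ 2) /
              (2 * BB ^ 2 * P) +
            (c ^ 2 * BB ^ 2 + c ^ 2 * x ^ 2 * s ^ 2 - BB ^ 2) / (BB ^ 2 * W) := by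
            field_simp
            ring
        _ = s ^ 2 * (2 - a * x - x ^ 2) / (2 * BB ^ 2 * P) - s ^ 2 * W / BB ^ 2 := by
            rw [n1, n2]
            rw [show -(s ^ 2 * W ^ 2) / (BB ^ 2 * W) = -(s ^ 2 * W / BB ^ 2) by
              field_simp]
            ring
    rw [key]
    clear key hF hsum h1 h2 h4 hvB hu1 hu2 hu3 hlt1 hlt2 hlt4 e1 e2 e4 hcont hpos₁ hpos₂
    -- key inequality : 2 P W < 2 - x² - a x
    have hgt : 0 < 2 - a * x - x ^ 2 := by nlinarith [sq_nonneg (a - x)]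
    have hq : 0 < (x - a) ^ 2 / (4 * c ^ 2) :=
      div_pos (pow_pos (sub_pos.mpr hx.1) 2) (by positivity)
    have hPW2 : (2 * P * W) ^ 2
        = 4 * (1 - a * x - (x - a) ^ 2 / (4 * c ^ 2)) * (1 - x ^ 2) := by
      rw [mul_pow, mul_pow, hP2, hW2]; ring
    have hid : (2 - a * x - x ^ 2) ^ 2 - (2 * P * W) ^ 2
        = (x * (x - a)) ^ 2 + 4 * ((1 - x ^ 2) * ((x - a) ^ 2 / (4 * c ^ 2))) := by
      rw [hPW2]; ring
    have hsq : (2 * P * W) ^ 2 < (2 - a * x - x ^ 2) ^ 2 := by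
      have h6 := mul_pos hW hq
      have h7 := sq_nonneg (x * (x - a))
      linarith
    have hkey : 2 * P * W < 2 - a * x - x ^ 2 :=
      lt_of_pow_lt_pow_left₀ 2 hgt.le hsq
    have hBB2pos : 0 < BB ^ 2 := by positivity
    rw [sub_pos, div_lt_div_iff₀ (by positivity) (by positivity)]
    have h5 : s ^ 2 * BB ^ 2 * (2 * P * W) < s ^ 2 * BB ^ 2 * (2 - a * x - x ^ 2) :=
      mul_lt_mul_of_pos_left hkey (by positivity)
    calc s ^ 2 * W * (2 * BB ^ 2 * P) = s ^ 2 * BB ^ 2 * (2 * P * W) := by ring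
      _ < s ^ 2 * BB ^ 2 * (2 - a * x - x ^ 2) := h5
      _ = s ^ 2 * (2 - a * x - x ^ 2) * BB ^ 2 := by ring
  -- strict monotonicity
  have hmono : StrictMonoOn F (Set.Icc a b) :=
    strictMonoOn_of_deriv_pos (convex_Icc a b) hcont hderiv
  have hFa : F a = 0 := by
    have e1 : ((a - a) / 2 * (1 / c) - a * c) / Real.sqrt (1 - a ^ 2 * s ^ 2)
        = -(a * c / Real.sqrt (1 - a ^ 2 * s ^ 2)) := by ring
    have e2 : ((a - a) / 2 * (1 / c) + a * c) / Real.sqrt (1 - a ^ 2 * s ^ 2)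
        = a * c / Real.sqrt (1 - a ^ 2 * s ^ 2) := by ring
    simp only [hFdef]
    rw [e1, e2, Real.arcsin_neg]
    ring
  have hfin : F a < F b :=
    hmono (Set.left_mem_Icc.mpr hab.le) (Set.right_mem_Icc.mpr hab.le) hab
  rw [hFa] at hfin
  simpa only [hFdef] using hfin
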